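/- Let q = p^v be an odd prime power and C ⊆ 𝔽_q^N a linear code. Then QR_C(X,Y,Z) = (1/|C^⊥|) · QR_{C^⊥}(X', Y', Z'), where X' = X + ((q−1)/2)(Y+Z), Y' = X + (−(Y+Z) + ε_q √q (Y−Z))/2, Z' = X + (−(Y+Z) + ε_q √q (Z−Y))/2, and ε_q = 1 if q ≡ 1 (mod 4), ε_q = i if q ≡ 3 (mod 4). -/

import Mathlib

open Finset

/-- The number of coordinates of a codeword that are nonzero squares. -/
noncomputable def resCount {ι F : Type*} [Field F] (c : ι → F) : ℕ :=
  Nat.card {i : ι // c i ≠ 0 ∧ IsSquare (c i)}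

/-- The number of coordinates of a codeword that are nonsquares. -/
noncomputable def nresCount {ι F : Type*} [Field F] (c : ι → F) : ℕ :=
  Nat.card {i : ι // ¬ IsSquare (c i)}

/-- The Hamming weight: the number of nonzero coordinates of a codeword. -/
noncomputable def wtCount {ι F : Type*} [Field F] (c : ι → F) : ℕ :=
  Nat.card {i : ι // c i ≠ 0}

namespace QRMW

open AddChar LinearMap

variable {F : Type*} [Field F] [Fintype F]

/-- `ψ` applied to a finite sum is the product of values. -/
lemma addChar_map_sum {ι : Type*} (ψ : AddChar F ℂ) (s : Finset ι) (f : ι → F) :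
    ψ (∑ i ∈ s, f i) = ∏ i ∈ s, ψ (f i) := by
  induction s using Finset.cons_induction with
  | empty => simp
  | cons a s ha ih => rw [Finset.sum_cons, Finset.prod_cons, AddChar.map_add_eq_mul, ih]

/-- The standard dot-product bilinear form on `Fin N → F`. -/
noncomputable def dotB (F : Type*) [Field F] (N : ℕ) : LinearMap.BilinForm F (Fin N → F) :=
  LinearMap.mk₂ F (fun x y => ∑ i, x i * y i)
    (fun x x' y => by simp [add_mul, Finset.sum_add_distrib])
    (fun c x y => by simp [Finset.mul_sum, mul_assoc])
    (fun x y y' => by simp [mul_add, Finset.sum_add_distrib])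
    (fun c x y => by simp [Finset.mul_sum]; congr 1; ext i; ring)

@[simp] lemma dotB_apply {N : ℕ} (x y : Fin N → F) : dotB F N x y = ∑ i, x i * y i := rfl

lemma dotB_symm {N : ℕ} : (dotB F N).IsSymm := ⟨fun x y => by
  simp [mul_comm]⟩

lemma dotB_nondegenerate {N : ℕ} : (dotB F N).Nondegenerate := by
  refine ⟨fun x hx => ?_, fun x hx => ?_⟩ <;>
  funext j <;>
  have := hx (Pi.single j 1) <;>
  simpa [Pi.single_apply, Finset.sum_ite_eq', Finset.sum_ite_eq] using this

/-- Character sum over a submodule vanishes if the linear functional is nonzero somewhere. -/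
lemma sum_addChar_eq_zero {M : Type*} [AddCommGroup M] [Module F M] [Fintype M]
    [DecidableEq M]
    (ψ : AddChar F ℂ) (D : Submodule F M) [DecidablePred (· ∈ D)]
    (L : M →ₗ[F] F) (hL : ∃ y ∈ D, L y ≠ 0) (hψ : ψ ≠ 1) :
    ∑ y ∈ univ.filter (· ∈ D), ψ (L y) = 0 := by
  obtain ⟨y₀, hy₀D, hy₀⟩ := hL
  obtain ⟨u, hu⟩ := AddChar.ne_one_iff.mp hψ
  set y₁ : M := (u / L y₀) • y₀ with hy₁def
  have hy₁D : y₁ ∈ D := D.smul_mem _ hy₀D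
  have hLy₁ : L y₁ = u := by
    rw [hy₁def, map_smul, smul_eq_mul, div_mul_cancel₀ _ hy₀]
  have key : ∑ y ∈ univ.filter (· ∈ D), ψ (L (y + y₁)) =
      ∑ y ∈ univ.filter (· ∈ D), ψ (L y) := by
    apply Finset.sum_equiv (Equiv.addRight y₁)
    · intro i
      simp only [Finset.mem_filter, Finset.mem_univ, true_and, Equiv.coe_addRight]
      exact ⟨fun h => D.add_mem h hy₁D, fun h => by
        have := D.sub_mem h hy₁D; simpa using this⟩
    · intro i _; rfl
  have expand : ∀ y : M, ψ (L (y + y₁)) = ψ u * ψ (L y) := by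
    intro y
    rw [map_add, hLy₁, AddChar.map_add_eq_mul, mul_comm]
  rw [Finset.sum_congr rfl (fun y _ => expand y), ← Finset.mul_sum] at key
  have : (ψ u - 1) * ∑ y ∈ univ.filter (· ∈ D), ψ (L y) = 0 := by
    rw [sub_mul, one_mul, key, sub_self]
  rcases mul_eq_zero.mp this with h | h
  · exact absurd (sub_eq_zero.mp h) hu
  · exact h


open scoped Classical in
lemma count_eq {N : ℕ} (c : Fin N → F) :
    resCount c = (univ.filter fun i => c i ≠ 0 ∧ IsSquare (c i)).card ∧
    nresCount c = (univ.filter fun i => ¬ IsSquare (c i)).card ∧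
    N - wtCount c = (univ.filter fun i => c i = 0).card := by
  refine ⟨?_, ?_, ?_⟩
  · rw [resCount, Nat.card_eq_fintype_card, Fintype.card_subtype]
  · rw [nresCount, Nat.card_eq_fintype_card, Fintype.card_subtype]
  · rw [wtCount, Nat.card_eq_fintype_card, Fintype.card_subtype]
    have h := Finset.card_filter_add_card_filter_not
      (s := (univ : Finset (Fin N))) (p := fun i => c i = 0)
    simp only [Finset.card_univ, Fintype.card_fin] at h
    have : (univ.filter fun i => ¬ c i = 0).card
        = (univ.filter fun i => c i ≠ 0).card := by simp [ne_eq]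
    omega

open scoped Classical in
/-- The key product decomposition. -/
lemma prod_g {N : ℕ} (c : Fin N → F) (X Y Z : ℂ) :
    (∏ i, if c i = 0 then X else if IsSquare (c i) then Y else Z)
      = X ^ (N - wtCount c) * Y ^ resCount c * Z ^ nresCount c := by
  obtain ⟨h1, h2, h3⟩ := count_eq c
  rw [h1, h2, h3]
  rw [← Finset.prod_filter_mul_prod_filter_not univ (fun i => c i = 0)]
  have e0 : (∏ i ∈ univ.filter fun i => c i = 0,
      if c i = 0 then X else if IsSquare (c i) then Y else Z)
      = X ^ (univ.filter fun i => c i = 0).card := by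
    rw [Finset.prod_congr rfl (fun i hi => by
      simp only [Finset.mem_filter] at hi; rw [if_pos hi.2]), Finset.prod_const]
  rw [e0]
  rw [← Finset.prod_filter_mul_prod_filter_not (univ.filter fun i => ¬ c i = 0)
    (fun i => IsSquare (c i))]
  have e1 : (∏ i ∈ (univ.filter fun i => ¬ c i = 0).filter fun i => IsSquare (c i),
      if c i = 0 then X else if IsSquare (c i) then Y else Z)
      = Y ^ (univ.filter fun i => c i ≠ 0 ∧ IsSquare (c i)).card := by
    rw [Finset.filter_filter]
    rw [Finset.prod_congr rfl (fun i hi => by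
      simp only [Finset.mem_filter] at hi
      rw [if_neg hi.2.1, if_pos hi.2.2]), Finset.prod_const]
  have e2 : (∏ i ∈ (univ.filter fun i => ¬ c i = 0).filter fun i => ¬ IsSquare (c i),
      if c i = 0 then X else if IsSquare (c i) then Y else Z)
      = Z ^ (univ.filter fun i => ¬ IsSquare (c i)).card := by
    rw [Finset.filter_filter]
    have hset : (univ.filter fun i => ¬ c i = 0 ∧ ¬ IsSquare (c i))
        = univ.filter fun i => ¬ IsSquare (c i) := by
      apply Finset.filter_congr
      intro i _
      constructor
      · tauto
      · intro h
        refine ⟨fun h0 => h ?_, h⟩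
        rw [h0]; exact IsSquare.zero
    rw [hset]
    rw [Finset.prod_congr rfl (fun i hi => by
      simp only [Finset.mem_filter] at hi
      have hne : ¬ c i = 0 := fun h0 => hi.2 (by rw [h0]; exact IsSquare.zero)
      rw [if_neg hne, if_neg hi.2]), Finset.prod_const]
  rw [e1, e2, mul_assoc]

/-- Poisson summation / MacWilliams transform for a multiplicative weight function. -/
lemma poisson {N : ℕ} [DecidableEq F] (C : Submodule F (Fin N → F))
    [DecidablePred (· ∈ C)]
    [DecidablePred (fun y : Fin N → F => ∀ x ∈ C, ∑ i, x i * y i = 0)]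
    (ψ : AddChar F ℂ) (hψ : ψ.IsPrimitive) (g : F → ℂ) :
    (((univ.filter (fun y : Fin N → F => ∀ x ∈ C, ∑ i, x i * y i = 0)).card : ℂ)) *
      ∑ c ∈ univ.filter (· ∈ C), ∏ i, g (c i)
      = ∑ y ∈ univ.filter (fun y : Fin N → F => ∀ x ∈ C, ∑ i, x i * y i = 0),
          ∏ i, ∑ a : F, ψ (a * y i) * g a := by
  classical
  have hψne : ψ ≠ 1 := by
    intro h
    exact hψ (one_ne_zero) (by rw [AddChar.mulShift_one, h])
  set D : Submodule F (Fin N → F) := (dotB F N).orthogonal C with hD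
  have hDmem : ∀ y : Fin N → F, (∀ x ∈ C, ∑ i, x i * y i = 0) ↔ y ∈ D := by
    intro y
    rw [hD, LinearMap.BilinForm.mem_orthogonal_iff]
    exact ⟨fun h n hn => h n hn, fun h x hx => h x hx⟩
  have hfilter : (univ.filter (fun y : Fin N → F => ∀ x ∈ C, ∑ i, x i * y i = 0))
      = univ.filter (· ∈ D) := by
    apply Finset.filter_congr; intro y _; simp [hDmem y]
  rw [hfilter]
  -- expand each product of sums
  have expand : ∀ y : Fin N → F, (∏ i, ∑ a : F, ψ (a * y i) * g a)
      = ∑ x : Fin N → F, ψ (∑ i, x i * y i) * ∏ i, g (x i) := by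
    intro y
    rw [Finset.prod_univ_sum]
    apply Finset.sum_congr rfl
    intro x _
    rw [addChar_map_sum, ← Finset.prod_mul_distrib]
  rw [Finset.sum_congr rfl (fun y _ => expand y), Finset.sum_comm]
  have inner : ∀ x : Fin N → F,
      (∑ y ∈ univ.filter (· ∈ D), ψ (∑ i, x i * y i) * ∏ i, g (x i))
      = (if x ∈ C then ((univ.filter (· ∈ D)).card : ℂ) else 0) * ∏ i, g (x i) := by
    intro x
    rw [← Finset.sum_mul]
    congr 1
    by_cases hx : x ∈ C
    · rw [if_pos hx]
      have h1 : ∀ y ∈ univ.filter (· ∈ D), ψ (∑ i, x i * y i) = 1 := fun y hy => by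
        rw [Finset.mem_filter] at hy
        simp only [(hDmem y).mpr hy.2 x hx, AddChar.map_zero_eq_one]
      rw [Finset.sum_congr rfl h1, Finset.sum_const, nsmul_eq_mul, mul_one]
    · rw [if_neg hx]
      have hx' : x ∉ (dotB F N).orthogonal D := by
        rw [hD, LinearMap.BilinForm.orthogonal_orthogonal dotB_nondegenerate
          dotB_symm.isRefl]
        exact hx
      rw [LinearMap.BilinForm.mem_orthogonal_iff] at hx'
      push_neg at hx'
      obtain ⟨y₀, hy₀D, hy₀⟩ := hx'
      have hex : ∃ y ∈ D, (dotB F N) x y ≠ 0 := by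
        refine ⟨y₀, hy₀D, ?_⟩
        intro h
        apply hy₀
        exact dotB_symm.isRefl x y₀ h
      exact sum_addChar_eq_zero ψ D ((dotB F N) x) hex hψne
  rw [Finset.sum_congr rfl (fun x _ => inner x)]
  have hsplit : ∀ x : Fin N → F,
      (if x ∈ C then ((univ.filter (· ∈ D)).card : ℂ) else 0) * ∏ i, g (x i)
      = if x ∈ C then ((univ.filter (· ∈ D)).card : ℂ) * ∏ i, g (x i) else 0 := by
    intro x; split <;> simp
  rw [Finset.sum_congr rfl (fun x _ => hsplit x), ← Finset.sum_filter, ← Finset.mul_sum]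


/-- The complex-valued quadratic character. -/
noncomputable def χc (F : Type*) [Field F] [Fintype F] [DecidableEq F] : MulChar F ℂ :=
  (quadraticChar F).ringHomComp (Int.castRingHom ℂ)

variable [DecidableEq F]

lemma χc_apply (a : F) : χc F a = ((quadraticChar F a : ℤ) : ℂ) := rfl

lemma χc_ne_one (hF : ringChar F ≠ 2) : χc F ≠ 1 :=
  (MulChar.ringHomComp_ne_one_iff (Int.cast_injective)).mpr (quadraticChar_ne_one hF)

lemma χc_quadratic : (χc F).IsQuadratic :=
  (quadraticChar_isQuadratic F).comp _

/-- Fourier transform of the weight function. -/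
lemma ghat (hF : ringChar F ≠ 2) {ψ : AddChar F ℂ} (hψ : ψ.IsPrimitive)
    (X Y Z G : ℂ) (hG : gaussSum (χc F) ψ = G) (b : F) :
    (∑ a : F, ψ (a * b) * (if a = 0 then X else if IsSquare a then Y else Z))
      = if b = 0 then X + ((Fintype.card F : ℂ) - 1) / 2 * (Y + Z)
        else if IsSquare b then X + (-(Y + Z) + G * (Y - Z)) / 2
        else X + (-(Y + Z) - G * (Y - Z)) / 2 := by
  have hptw : ∀ a : F, (if a = 0 then X else if IsSquare a then Y else Z)
      = (if a = 0 then X - (Y + Z) / 2 else 0) + (Y + Z) / 2 + (Y - Z) / 2 * χc F a := by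
    intro a
    by_cases ha : a = 0
    · rw [if_pos ha, if_pos ha, ha, χc_apply]
      simp
    · rw [if_neg ha, if_neg ha, χc_apply]
      by_cases hsq : IsSquare a
      · rw [if_pos hsq, (quadraticChar_one_iff_isSquare ha).mpr hsq]
        push_cast; ring
      · rw [if_neg hsq, quadraticChar_neg_one_iff_not_isSquare.mpr hsq]
        push_cast; ring
  rw [Finset.sum_congr rfl (fun a _ => by rw [hptw a])]
  have expand : ∀ a : F, ψ (a * b) * ((if a = 0 then X - (Y + Z) / 2 else 0)
        + (Y + Z) / 2 + (Y - Z) / 2 * χc F a)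
      = (if a = 0 then X - (Y + Z) / 2 else 0) * ψ (a * b)
        + (Y + Z) / 2 * ψ (a * b) + (Y - Z) / 2 * (χc F a * ψ (a * b)) := by
    intro a
    by_cases ha : a = 0 <;> simp [ha] <;> ring
  rw [Finset.sum_congr rfl (fun a _ => expand a)]
  rw [Finset.sum_add_distrib, Finset.sum_add_distrib, ← Finset.mul_sum, ← Finset.mul_sum]
  have S1 : (∑ a : F, (if a = 0 then X - (Y + Z) / 2 else 0) * ψ (a * b))
      = X - (Y + Z) / 2 := by
    rw [Finset.sum_eq_single 0]
    · simp
    · intro a _ ha; rw [if_neg ha, zero_mul]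
    · intro h; exact absurd (Finset.mem_univ 0) h
  have S2 : (∑ a : F, ψ (a * b)) = if b = 0 then (Fintype.card F : ℂ) else 0 := by
    rw [AddChar.sum_mulShift b hψ, Nat.cast_ite, Nat.cast_zero]
  rw [S1, S2]
  by_cases hb : b = 0
  · have S3 : (∑ a : F, χc F a * ψ (a * b)) = 0 := by
      rw [Finset.sum_congr rfl (fun a _ => by
        rw [hb, mul_zero, AddChar.map_zero_eq_one, mul_one])]
      have := quadraticChar_sum_zero hF
      calc (∑ a : F, χc F a) = ((∑ a : F, quadraticChar F a : ℤ) : ℂ) := by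
            push_cast [χc_apply]; rfl
        _ = 0 := by rw [this]; simp
    rw [S3, if_pos hb, if_pos hb]
    ring
  · have hbu : IsUnit b := Ne.isUnit hb
    have S3 : (∑ a : F, χc F a * ψ (a * b)) = χc F b * G := by
      have h1 : gaussSum (χc F) (AddChar.mulShift ψ b) = ∑ a : F, χc F a * ψ (a * b) := by
        unfold gaussSum
        apply Finset.sum_congr rfl
        intro a _
        rw [AddChar.mulShift_apply, mul_comm b a]
      have h2 := gaussSum_mulShift (χc F) ψ hbu.unit
      rw [IsUnit.unit_spec] at h2
      rw [h1] at h2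
      have hsq : χc F b * χc F b = 1 := by
        rcases χc_quadratic (F := F) b with h | h | h
        · exfalso
          apply hb
          rw [χc_apply] at h
          exact quadraticChar_eq_zero_iff.mp (by exact_mod_cast h)
        · rw [h]; ring
        · rw [h]; ring
      calc (∑ a : F, χc F a * ψ (a * b))
          = χc F b * (χc F b * (∑ a : F, χc F a * ψ (a * b))) := by
            rw [← mul_assoc, hsq, one_mul]
        _ = χc F b * G := by rw [h2, hG]
    rw [S3, if_neg hb, if_neg hb]
    by_cases hsqb : IsSquare b
    · rw [if_pos hsqb, χc_apply, (quadraticChar_one_iff_isSquare hb).mpr hsqb]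
      push_cast; ring
    · rw [if_neg hsqb, χc_apply, quadraticChar_neg_one_iff_not_isSquare.mpr hsqb]
      push_cast; ring


/-- There is a primitive additive character whose quadratic Gauss sum is exactly `ε √q`. -/
lemma exists_good_char (hodd : Odd (Fintype.card F)) (ε : ℂ)
    (hε : ε = if Fintype.card F % 4 = 1 then 1 else Complex.I) :
    ∃ ψ : AddChar F ℂ, ψ.IsPrimitive ∧
      gaussSum (χc F) ψ = ε * (Real.sqrt (Fintype.card F) : ℝ) := by
  have hq2 : Fintype.card F % 2 = 1 := Nat.odd_iff.mp hodd
  have hF : ringChar F ≠ 2 := by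
    intro h
    have := FiniteField.even_card_of_char_two h
    omega
  have h4 : Fintype.card F % 4 = 1 ∨ Fintype.card F % 4 = 3 := by omega
  set q : ℕ := Fintype.card F with hqdef
  set s : ℂ := ε * (Real.sqrt q : ℝ) with hsdef
  have hsqrt : ((Real.sqrt q : ℝ) : ℂ) ^ 2 = (q : ℂ) := by
    rw [← Complex.ofReal_pow, Real.sq_sqrt (by positivity)]
    simp
  have hχm1 : (χc F) (-1) = if q % 4 = 1 then 1 else -1 := by
    rcases h4 with h | h
    · rw [if_pos h, χc_apply]
      have hsq : IsSquare (-1 : F) := FiniteField.isSquare_neg_one_iff.mpr (by omega)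
      rw [(quadraticChar_one_iff_isSquare (by simp)).mpr hsq]
      simp
    · rw [if_neg (by omega), χc_apply]
      have hsq : ¬ IsSquare (-1 : F) := by
        rw [FiniteField.isSquare_neg_one_iff]
        omega
      rw [quadraticChar_neg_one_iff_not_isSquare.mpr hsq]
      simp
  have hs2 : s ^ 2 = (χc F) (-1) * q := by
    rcases h4 with h | h
    · rw [hχm1, if_pos h, one_mul, hsdef, hε, if_pos h, one_mul, hsqrt]
    · rw [hχm1, if_neg (by omega), hsdef, hε, if_neg (by omega), mul_pow, hsqrt,
        Complex.I_sq]
  set ψ₀ : AddChar F ℂ := FiniteField.primitiveChar_to_Complex F with hψ₀def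
  have hψ₀ : ψ₀.IsPrimitive := FiniteField.primitiveChar_to_Complex_isPrimitive F
  have hG0 : gaussSum (χc F) ψ₀ ^ 2 = (χc F) (-1) * q :=
    gaussSum_sq (χc_ne_one hF) χc_quadratic hψ₀
  have hcases : gaussSum (χc F) ψ₀ = s ∨ gaussSum (χc F) ψ₀ = -s := by
    have h := hG0.trans hs2.symm
    have : (gaussSum (χc F) ψ₀ - s) * (gaussSum (χc F) ψ₀ + s) = 0 := by
      linear_combination h
    rcases mul_eq_zero.mp this with h | h
    · exact Or.inl (by linear_combination h)
    · exact Or.inr (by linear_combination h)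
  rcases hcases with h | h
  · exact ⟨ψ₀, hψ₀, h⟩
  · obtain ⟨a, ha⟩ := quadraticChar_exists_neg_one' hF
    refine ⟨AddChar.mulShift ψ₀ (a : F), ?_, ?_⟩
    · apply AddChar.IsPrimitive.of_ne_one
      exact hψ₀ a.ne_zero
    · have h2 := gaussSum_mulShift (χc F) ψ₀ a
      rw [h, χc_apply, ha] at h2
      push_cast at h2
      linear_combination -h2

end QRMW

open scoped Classical in
/-- The MacWilliams theorem for the quadratic residue weight enumerator: for `q` odd and a
linear code `C ⊆ 𝔽_q^N`, `QR_C(X,Y,Z) = (1/|C^⊥|) QR_{C^⊥}(X', Y', Z')` where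
`X' = X + ((q-1)/2)(Y+Z)`, `Y' = X + (-(Y+Z) + ε_q √q (Y-Z))/2`,
`Z' = X + (-(Y+Z) + ε_q √q (Z-Y))/2`, and `ε_q = 1` if `q ≡ 1 (mod 4)`, `ε_q = i` if
`q ≡ 3 (mod 4)`. -/
theorem qr_macwilliams {F : Type*} [Field F] [Fintype F]
    (hodd : Odd (Fintype.card F)) {N : ℕ} (C : Submodule F (Fin N → F))
    (X Y Z : ℂ) (ε : ℂ)
    (hε : ε = if Fintype.card F % 4 = 1 then 1 else Complex.I) :
    (∑ c ∈ univ.filter (fun c => c ∈ C),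
        X ^ (N - wtCount c) * Y ^ resCount c * Z ^ nresCount c) =
      ((univ.filter (fun y : Fin N → F => ∀ x ∈ C, ∑ i, x i * y i = 0)).card : ℂ)⁻¹ *
        ∑ y ∈ univ.filter (fun y : Fin N → F => ∀ x ∈ C, ∑ i, x i * y i = 0),
          (X + ((Fintype.card F : ℂ) - 1) / 2 * (Y + Z)) ^ (N - wtCount y) *
            (X + (-(Y + Z) + ε * Real.sqrt (Fintype.card F) * (Y - Z)) / 2) ^ resCount y *
            (X + (-(Y + Z) + ε * Real.sqrt (Fintype.card F) * (Z - Y)) / 2) ^ nresCount y := by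
  classical
  have hq2 : Fintype.card F % 2 = 1 := Nat.odd_iff.mp hodd
  have hF : ringChar F ≠ 2 := by
    intro h
    have := FiniteField.even_card_of_char_two h
    omega
  obtain ⟨ψ, hψ, hG⟩ := QRMW.exists_good_char hodd ε hε
  set G : ℂ := ε * (Real.sqrt (Fintype.card F) : ℝ) with hGdef
  set g : F → ℂ := fun a => if a = 0 then X else if IsSquare a then Y else Z with hg
  set D := univ.filter (fun y : Fin N → F => ∀ x ∈ C, ∑ i, x i * y i = 0) with hD
  have hD0 : (0 : Fin N → F) ∈ D := by
    rw [hD, Finset.mem_filter]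
    exact ⟨Finset.mem_univ _, fun x _ => by simp⟩
  have hDcard : (D.card : ℂ) ≠ 0 := by
    have : 0 < D.card := Finset.card_pos.mpr ⟨0, hD0⟩
    exact_mod_cast this.ne'
  have hpoisson := QRMW.poisson C ψ hψ g
  have lhs_eq : (∑ c ∈ univ.filter (fun c => c ∈ C),
        X ^ (N - wtCount c) * Y ^ resCount c * Z ^ nresCount c)
      = ∑ c ∈ univ.filter (· ∈ C), ∏ i, g (c i) := by
    apply Finset.sum_congr rfl
    intro c _
    rw [hg, QRMW.prod_g]
  have rhs_eq : ∀ y : Fin N → F, (∏ i, ∑ a : F, ψ (a * y i) * g a)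
      = (X + ((Fintype.card F : ℂ) - 1) / 2 * (Y + Z)) ^ (N - wtCount y) *
          (X + (-(Y + Z) + G * (Y - Z)) / 2) ^ resCount y *
          (X + (-(Y + Z) + G * (Z - Y)) / 2) ^ nresCount y := by
    intro y
    have hptw : ∀ i : Fin N, (∑ a : F, ψ (a * y i) * g a)
        = if y i = 0 then X + ((Fintype.card F : ℂ) - 1) / 2 * (Y + Z)
          else if IsSquare (y i) then X + (-(Y + Z) + G * (Y - Z)) / 2
          else X + (-(Y + Z) + G * (Z - Y)) / 2 := by
      intro i
      rw [hg, QRMW.ghat hF hψ X Y Z G hG (y i)]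
      congr 2
      ring
    rw [Finset.prod_congr rfl (fun i _ => hptw i), QRMW.prod_g]
  rw [← hD] at hpoisson
  rw [lhs_eq, eq_inv_mul_iff_mul_eq₀ hDcard, hpoisson]
  exact Finset.sum_congr rfl (fun y _ => rhs_eq y)
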